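/- If X is a symmetric random variable, then E[tanh(X)] = E[tanh²(X)], provided both expectations exist. -/

import Mathlib

open MeasureTheory ProbabilityTheory Real Filter

/-- A real random variable `X` on `(Ω, μ)` is (log-likelihood-ratio) symmetric if
`E[f(-X)] = E[e^{-2X} f(X)]` for every bounded measurable `f`. -/
def IsLLRSymmetric {Ω : Type*} [MeasurableSpace Ω] (μ : Measure Ω) (X : Ω → ℝ) : Prop :=
  ∀ f : ℝ → ℝ, Measurable f → (∃ C, ∀ x, |f x| ≤ C) →
    ∫ ω, f (-(X ω)) ∂μ = ∫ ω, Real.exp (-2 * X ω) * f (X ω) ∂μ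

lemma abs_tanh_le_one (x : ℝ) : |Real.tanh x| ≤ 1 := by
  have hc : 0 < Real.cosh x := Real.cosh_pos x
  have hs : |Real.sinh x| ≤ Real.cosh x := by
    have h := Real.cosh_sq_sub_sinh_sq x
    nlinarith [abs_nonneg (Real.sinh x), sq_abs (Real.sinh x)]
  rw [Real.tanh_eq_sinh_div_cosh, abs_div, abs_of_pos hc, div_le_one hc]
  exact hs

lemma key_id (x : ℝ) :
    Real.exp (-2 * x) * (Real.tanh x + Real.tanh x ^ 2)
      = Real.tanh x - Real.tanh x ^ 2 := by
  have hc : Real.cosh x ≠ 0 := (Real.cosh_pos x).ne'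
  have h1 : Real.cosh x + Real.sinh x = Real.exp x := Real.cosh_add_sinh x
  have h2 : Real.cosh x - Real.sinh x = Real.exp (-x) := Real.cosh_sub_sinh x
  have h3 : Real.exp (-2 * x) * Real.exp x = Real.exp (-x) := by
    rw [← Real.exp_add]; ring_nf
  have h4 : Real.exp (-(2 * x)) * (Real.cosh x + Real.sinh x)
      = Real.cosh x - Real.sinh x := by
    rw [h1, h2, ← Real.exp_add]; ring_nf
  rw [Real.tanh_eq_sinh_div_cosh]
  field_simp
  linear_combination (Real.sinh x) * h4

/-- If `X` is symmetric then `E[tanh X] = E[tanh² X]` (both expectations exist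
since `tanh` is bounded and `μ` is a probability measure). -/
theorem symmetric_tanh_eq_tanh_sq {Ω : Type*} [MeasurableSpace Ω] (μ : Measure Ω)
    [IsProbabilityMeasure μ] (X : Ω → ℝ) (hX : Measurable X)
    (hsym : IsLLRSymmetric μ X)
    (h1 : Integrable (fun ω => Real.tanh (X ω)) μ)
    (h2 : Integrable (fun ω => Real.tanh (X ω) ^ 2) μ) :
    ∫ ω, Real.tanh (X ω) ∂μ = ∫ ω, Real.tanh (X ω) ^ 2 ∂μ := by
  set f : ℝ → ℝ := fun x => Real.tanh x + Real.tanh x ^ 2 with hf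
  have hct : Continuous Real.tanh := by
    have he : Real.tanh = fun x => Real.sinh x / Real.cosh x :=
      funext fun x => Real.tanh_eq_sinh_div_cosh x
    rw [he]
    exact Real.continuous_sinh.div Real.continuous_cosh fun x => (Real.cosh_pos x).ne'
  have hmeas : Measurable f :=
    (hct.measurable).add ((hct.measurable).pow_const 2)
  have hbdd : ∃ C, ∀ x, |f x| ≤ C := by
    refine ⟨2, fun x => ?_⟩
    have h := abs_tanh_le_one x
    calc |f x| ≤ |Real.tanh x| + |Real.tanh x ^ 2| := abs_add_le _ _
      _ ≤ 1 + 1 := by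
          refine add_le_add h ?_
          rw [abs_pow]
          exact pow_le_one₀ (abs_nonneg _) h
      _ = 2 := by norm_num
  have hs := hsym f hmeas hbdd
  have hl : (∫ ω, f (-(X ω)) ∂μ)
      = ∫ ω, (Real.tanh (X ω) ^ 2 - Real.tanh (X ω)) ∂μ := by
    congr 1; funext ω; simp [hf, Real.tanh_neg, neg_pow]; ring
  have hr : (∫ ω, Real.exp (-2 * X ω) * f (X ω) ∂μ)
      = ∫ ω, (Real.tanh (X ω) - Real.tanh (X ω) ^ 2) ∂μ := by
    congr 1; funext ω; exact key_id (X ω)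
  rw [hl, hr, integral_sub h2 h1, integral_sub h1 h2] at hs
  linarith
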